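/- Let φ̃ : ℝ → ℝ be an increasing homeomorphism of ℝ satisfying φ̃(θ + 2π) = φ̃(θ) + 2π for all θ ∈ ℝ (the lift of an orientation-preserving circle homeomorphism). Then the limit lim_{n→∞} (1/n)·(1/(4π²))·∫₀^{2π} (φ̃ⁿ(θ) − θ) dθ exists and equals the translation number rot̃(φ̃) = lim_{n→∞} φ̃ⁿ(0)/(2πn). In other words, the homogenization of the quasi-morphism f(φ̃) = (1/(4π²))∫₀^{2π}(φ̃(θ) − θ)dθ is Poincaré's translation number. -/

import Mathlib

open Filter Topology Real

/-- For an increasing homeomorphism `φ` of `ℝ` commuting with the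
translation by `2π` (the lift of an orientation-preserving circle homeomorphism),
the homogenization of the quasi-morphism
`f(φ) = (1/(4π²)) ∫₀^{2π} (φ(θ) - θ) dθ` exists and equals Poincaré's
translation number `rot̃(φ) = lim_n φⁿ(0)/(2πn)`. -/
theorem homogenization_of_integral_quasimorphism_is_translation_number
    (φ : ℝ → ℝ) (hmono : StrictMono φ) (hcont : Continuous φ)
    (hsurj : Function.Surjective φ)
    (hper : ∀ θ : ℝ, φ (θ + 2 * π) = φ θ + 2 * π) :
    ∃ r : ℝ,
      Tendsto (fun n : ℕ => φ^[n] 0 / (2 * π * n)) atTop (𝓝 r) ∧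
      Tendsto (fun n : ℕ =>
          (1 / (n : ℝ)) * ((1 / (4 * π ^ 2)) * ∫ θ in (0:ℝ)..(2 * π), (φ^[n] θ - θ)))
        atTop (𝓝 r) := by
  have hπ : (0:ℝ) < π := Real.pi_pos
  have h2π : (0:ℝ) < 2 * π := by positivity
  -- Conjugate φ by the scaling x ↦ 2πx to get a `CircleDeg1Lift`.
  set ψ : CircleDeg1Lift :=
    { toFun := fun x => φ (2 * π * x) / (2 * π)
      monotone' := fun a b hab =>
        (div_le_div_iff_of_pos_right h2π).mpr (hmono.monotone (by nlinarith))
      map_add_one' := fun x => by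
        show φ (2 * π * (x + 1)) / (2 * π) = φ (2 * π * x) / (2 * π) + 1
        have h : 2 * π * (x + 1) = 2 * π * x + 2 * π := by ring
        rw [h, hper]
        field_simp } with hψ
  have hψcoe : ∀ x : ℝ, ψ x = φ (2 * π * x) / (2 * π) := fun x => rfl
  have hiter : ∀ n : ℕ, ∀ x : ℝ, (⇑ψ)^[n] x = φ^[n] (2 * π * x) / (2 * π) := by
    intro n
    induction n with
    | zero => intro x; simp
    | succ n ih =>
      intro x
      rw [Function.iterate_succ_apply, Function.iterate_succ_apply, hψcoe, ih]
      have h : 2 * π * (φ (2 * π * x) / (2 * π)) = φ (2 * π * x) := by field_simp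
      rw [h]
  have hA : Tendsto (fun n : ℕ => φ^[n] 0 / (2 * π * n)) atTop
      (𝓝 (CircleDeg1Lift.translationNumber ψ)) := by
    have := ψ.tendsto_translation_number₀
    refine this.congr fun n => ?_
    rw [CircleDeg1Lift.coe_pow, hiter n 0]
    rw [mul_zero]
    rw [div_div]
  refine ⟨CircleDeg1Lift.translationNumber ψ, hA, ?_⟩
  -- basic facts about iterates of φ
  have hcontn : ∀ n : ℕ, Continuous (φ^[n]) := fun n => hcont.iterate n
  have hmonon : ∀ n : ℕ, Monotone (φ^[n]) := fun n => hmono.monotone.iterate n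
  have hpern : ∀ n : ℕ, ∀ θ : ℝ, φ^[n] (θ + 2 * π) = φ^[n] θ + 2 * π := by
    intro n
    induction n with
    | zero => intro θ; simp
    | succ n ih =>
      intro θ
      rw [Function.iterate_succ_apply, hper, ih, ← Function.iterate_succ_apply]
  have hInt : ∀ n : ℕ, IntervalIntegrable (fun θ => φ^[n] θ - θ) MeasureTheory.volume 0 (2*π) :=
    fun n => ((hcontn n).sub continuous_id).intervalIntegrable _ _
  have hconstInt : ∀ c : ℝ, IntervalIntegrable (fun θ : ℝ => c - θ) MeasureTheory.volume 0 (2*π) :=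
    fun c => (continuous_const.sub continuous_id).intervalIntegrable _ _
  have hval : ∀ c : ℝ, (∫ θ in (0:ℝ)..(2*π), (c - θ)) = 2*π*c - 2*π^2 := by
    intro c
    have hid : IntervalIntegrable (fun θ : ℝ => θ) MeasureTheory.volume 0 (2*π) :=
      continuous_id.intervalIntegrable _ _
    rw [intervalIntegral.integral_sub intervalIntegrable_const hid,
      intervalIntegral.integral_const, integral_id]
    simp
    ring
  have hlow : ∀ n : ℕ, 2*π*(φ^[n] 0) - 2*π^2 ≤ ∫ θ in (0:ℝ)..(2*π), (φ^[n] θ - θ) := by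
    intro n
    rw [← hval (φ^[n] 0)]
    apply intervalIntegral.integral_mono_on (le_of_lt h2π) (hconstInt _) (hInt n)
    intro θ hθ
    have := hmonon n hθ.1
    simpa using this
  have hhigh : ∀ n : ℕ, (∫ θ in (0:ℝ)..(2*π), (φ^[n] θ - θ)) ≤ 2*π*(φ^[n] 0) + 2*π^2 := by
    intro n
    have : 2*π*(φ^[n] 0) + 2*π^2 = 2*π*(φ^[n] 0 + 2*π) - 2*π^2 := by ring
    rw [this, ← hval (φ^[n] 0 + 2*π)]
    apply intervalIntegral.integral_mono_on (le_of_lt h2π) (hInt n) (hconstInt _)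
    intro θ hθ
    have h1 : φ^[n] θ ≤ φ^[n] (2*π) := hmonon n hθ.2
    have h2 : φ^[n] (2*π) = φ^[n] 0 + 2*π := by
      have := hpern n 0
      simpa using this
    linarith [h1, h2]
  -- squeeze
  have hdiff : Tendsto (fun n : ℕ =>
      (1 / (n : ℝ)) * ((1 / (4 * π ^ 2)) * ∫ θ in (0:ℝ)..(2 * π), (φ^[n] θ - θ))
        - φ^[n] 0 / (2 * π * n)) atTop (𝓝 0) := by
    refine squeeze_zero_norm (fun n => ?_) tendsto_one_div_atTop_nhds_zero_nat
    rcases Nat.eq_zero_or_pos n with hn | hn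
    · subst hn; simp
    have hn' : (0:ℝ) < n := by exact_mod_cast hn
    have key : |(1 / (4 * π ^ 2)) * (∫ θ in (0:ℝ)..(2 * π), (φ^[n] θ - θ))
        - φ^[n] 0 / (2 * π)| ≤ 1 := by
      rw [abs_le]
      have hl := hlow n
      have hh := hhigh n
      have h4 : (0:ℝ) < 4 * π ^ 2 := by positivity
      have e1 : (1 / (4 * π ^ 2)) * (∫ θ in (0:ℝ)..(2 * π), (φ^[n] θ - θ))
          - φ^[n] 0 / (2 * π)
          = ((∫ θ in (0:ℝ)..(2 * π), (φ^[n] θ - θ)) - 2*π*(φ^[n] 0)) / (4 * π ^ 2) := by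
        field_simp
        ring
      constructor
      · rw [e1, le_div_iff₀ h4]
        linarith
      · rw [e1, div_le_iff₀ h4]
        linarith
    have heq : (1 / (n : ℝ)) * ((1 / (4 * π ^ 2)) * ∫ θ in (0:ℝ)..(2 * π), (φ^[n] θ - θ))
        - φ^[n] 0 / (2 * π * n)
        = (1 / (n : ℝ)) * ((1 / (4 * π ^ 2)) * (∫ θ in (0:ℝ)..(2 * π), (φ^[n] θ - θ))
          - φ^[n] 0 / (2 * π)) := by
      field_simp
    rw [heq, norm_mul]
    have : ‖(1 / (n : ℝ))‖ = 1 / (n:ℝ) := by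
      rw [Real.norm_eq_abs, abs_of_nonneg]; positivity
    rw [this]
    calc (1 / (n:ℝ)) * ‖(1 / (4 * π ^ 2)) * (∫ θ in (0:ℝ)..(2 * π), (φ^[n] θ - θ))
          - φ^[n] 0 / (2 * π)‖ ≤ (1 / (n:ℝ)) * 1 := by
            apply mul_le_mul_of_nonneg_left _ (by positivity)
            rw [Real.norm_eq_abs]; exact key
      _ = 1 / (n:ℝ) := mul_one _
  have := hA.add hdiff
  rw [add_zero] at this
  refine this.congr fun n => ?_
  ring
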